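/- For every integer m ≥ 0, ζ(1̄, 1̄, {1}_m) = -Li_{m+2}(1/2), where ζ(1̄, 1̄, {1}_m) = Σ_{k_0 > k_1 > ⋯ > k_{m+1} ≥ 1} (-1)^{k_0 + k_1} / (k_0 k_1 ⋯ k_{m+1}) and Li_p(x) = Σ_{n≥1} x^n/n^p. -/

import Mathlib

open Filter Finset

noncomputable def bet (i j : ℕ) : ℝ :=
  (Nat.factorial i * Nat.factorial j : ℝ) / (Nat.factorial (i + j + 1) : ℝ)

lemma bet_pos (i j : ℕ) : 0 < bet i j := by
  unfold bet
  positivity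

lemma bet_zero (i : ℕ) : bet i 0 = 1 / (i + 1 : ℝ) := by
  unfold bet
  rw [show i + 0 + 1 = i + 1 from rfl, Nat.factorial_succ]
  push_cast
  rw [Nat.factorial_zero]
  have : (Nat.factorial i : ℝ) ≠ 0 := Nat.cast_ne_zero.2 (Nat.factorial_ne_zero i)
  field_simp
  ring

lemma bet_succ_right (i j : ℕ) :
    bet i (j + 1) = bet i j * ((j + 1 : ℝ) / (i + j + 2 : ℝ)) := by
  unfold bet
  rw [show i + (j + 1) + 1 = (i + j + 1) + 1 by ring, Nat.factorial_succ (i+j+1),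
    Nat.factorial_succ j]
  have h1 : (Nat.factorial (i+j+1) : ℝ) ≠ 0 := Nat.cast_ne_zero.2 (Nat.factorial_ne_zero _)
  have h2 : ((i:ℝ) + j + 2) ≠ 0 := by positivity
  push_cast
  field_simp
  ring

lemma bet_succ_left (i j : ℕ) :
    bet (i + 1) j = bet i j * ((i + 1 : ℝ) / (i + j + 2 : ℝ)) := by
  unfold bet
  rw [show i + 1 + j + 1 = (i + j + 1) + 1 by ring, Nat.factorial_succ (i+j+1),
    Nat.factorial_succ i]
  have h1 : (Nat.factorial (i+j+1) : ℝ) ≠ 0 := Nat.cast_ne_zero.2 (Nat.factorial_ne_zero _)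
  have h2 : ((i:ℝ) + j + 2) ≠ 0 := by positivity
  push_cast
  field_simp
  ring

lemma bet_le_right (i j : ℕ) : bet i j ≤ 1 / (j + 1 : ℝ) := by
  induction i with
  | zero =>
    unfold bet
    rw [show 0 + j + 1 = j + 1 by ring, Nat.factorial_succ j, Nat.factorial_zero]
    have h : (0:ℝ) < (Nat.factorial j : ℝ) := by positivity
    push_cast
    rw [div_le_div_iff₀ (by positivity) (by positivity)]
    nlinarith
  | succ i ih =>
    rw [bet_succ_left]
    have h := bet_pos i j
    have : ((i:ℝ) + 1) / ((i:ℝ) + j + 2) ≤ 1 := by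
      rw [div_le_one (by positivity)]; linarith
    calc bet i j * ((i + 1 : ℝ) / (i + j + 2 : ℝ)) ≤ bet i j * 1 := by
          apply mul_le_mul_of_nonneg_left this h.le
      _ = bet i j := mul_one _
      _ ≤ 1 / (j + 1 : ℝ) := ih

lemma bet_le_left (i j : ℕ) : bet i j ≤ 1 / (i + 1 : ℝ) := by
  induction j with
  | zero => rw [bet_zero]
  | succ j ih =>
    rw [bet_succ_right]
    have h := bet_pos i j
    have : ((j:ℝ) + 1) / ((i:ℝ) + j + 2) ≤ 1 := by
      rw [div_le_one (by positivity)]; linarith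
    calc bet i j * ((j + 1 : ℝ) / (i + j + 2 : ℝ)) ≤ bet i j * 1 := by
          apply mul_le_mul_of_nonneg_left this h.le
      _ = bet i j := mul_one _
      _ ≤ 1 / (i + 1 : ℝ) := ih

/-- Telescoping identity T1: `bet i j / j = (bet i (j-1) - bet i j)/(i+1)` in the form below. -/
lemma bet_T1 (i j : ℕ) :
    bet i (j + 1) / ((j : ℝ) + 1) = (bet i j - bet i (j + 1)) / ((i : ℝ) + 1) := by
  rw [bet_succ_right]
  have h2 : ((i:ℝ) + j + 2) ≠ 0 := by positivity
  field_simp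
  ring

/-- Telescoping identity T2. -/
lemma bet_T2 (i j : ℕ) :
    (1/2 : ℝ) ^ (i + 1) * (bet i j + bet i (j + 1)) =
      (1/2 : ℝ) ^ i * bet i j - (1/2 : ℝ) ^ (i + 1) * bet (i + 1) j := by
  rw [bet_succ_right, bet_succ_left, pow_succ]
  have h2 : ((i:ℝ) + j + 2) ≠ 0 := by positivity
  field_simp
  ring

lemma bet_zero_left (j : ℕ) : bet 0 j = 1 / ((j:ℝ) + 1) := by
  unfold bet
  rw [show 0 + j + 1 = j + 1 by ring, Nat.factorial_succ, Nat.factorial_zero]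
  have h : (Nat.factorial j : ℝ) ≠ 0 := Nat.cast_ne_zero.2 (Nat.factorial_ne_zero j)
  push_cast
  field_simp

/-- Multiple harmonic number `ζ_n({1}_m)`. -/
noncomputable def mhn : ℕ → ℕ → ℝ
  | _, 0 => 1
  | n, m + 1 => ∑ j ∈ Finset.Icc 1 n, (1 / (j : ℝ)) * mhn (j - 1) m

lemma mhn_nonneg (m n : ℕ) : 0 ≤ mhn n m := by
  induction m generalizing n with
  | zero => rw [mhn]; norm_num
  | succ m ih =>
    rw [mhn]
    apply Finset.sum_nonneg
    intro j hj
    exact mul_nonneg (by positivity) (ih _)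

lemma sum_one_div_sqrt_le (n : ℕ) :
    ∑ j ∈ Finset.Icc 1 n, 1 / Real.sqrt (j : ℝ) ≤ 2 * Real.sqrt (n : ℝ) := by
  induction n with
  | zero => simp
  | succ n ih =>
    rw [Finset.sum_Icc_succ_top (by omega)]
    have h1 : (0:ℝ) < Real.sqrt ((n:ℝ) + 1) := Real.sqrt_pos.2 (by positivity)
    have key : 1 / Real.sqrt ((n:ℕ) + 1 : ℕ) ≤ 2 * Real.sqrt ((n:ℝ) + 1) - 2 * Real.sqrt (n:ℝ) := by
      push_cast
      have hs : Real.sqrt ((n:ℝ)) ≤ Real.sqrt ((n:ℝ) + 1) := Real.sqrt_le_sqrt (by linarith)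
      have hsq : Real.sqrt ((n:ℝ)+1) * Real.sqrt ((n:ℝ)+1) = (n:ℝ)+1 :=
        Real.mul_self_sqrt (by positivity)
      have hsq2 : Real.sqrt (n:ℝ) * Real.sqrt (n:ℝ) = (n:ℝ) :=
        Real.mul_self_sqrt (by positivity)
      rw [div_le_iff₀ h1]
      nlinarith
    push_cast at key ⊢
    push_cast at ih
    linarith

lemma mhn_le (m n : ℕ) : mhn n m ≤ 2 ^ m * Real.sqrt ((n : ℝ) + 1) := by
  induction m generalizing n with
  | zero =>
    rw [mhn, pow_zero, one_mul]
    have h := Real.sqrt_le_sqrt (show (1:ℝ) ≤ (n:ℝ)+1 by have := Nat.cast_nonneg (α := ℝ) n; linarith)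
    simp only [Real.sqrt_one] at h
    exact h
  | succ m ih =>
    rw [mhn]
    have step : ∀ j ∈ Finset.Icc 1 n, (1 / (j:ℝ)) * mhn (j-1) m ≤ 2^m * (1 / Real.sqrt (j:ℝ)) := by
      intro j hj
      rw [Finset.mem_Icc] at hj
      have hj1 : 1 ≤ j := hj.1
      have hjpos : (0:ℝ) < (j:ℝ) := by exact_mod_cast hj1
      have hcast : ((j - 1 : ℕ) : ℝ) + 1 = (j : ℝ) := by
        have : (j - 1) + 1 = j := by omega
        exact_mod_cast congrArg (Nat.cast (R := ℝ)) this
      have h1 : mhn (j-1) m ≤ 2^m * Real.sqrt (j:ℝ) := by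
        have := ih (j-1); rwa [hcast] at this
      have hs : (0:ℝ) < Real.sqrt (j:ℝ) := Real.sqrt_pos.2 hjpos
      have hsq : Real.sqrt (j:ℝ) * Real.sqrt (j:ℝ) = (j:ℝ) := Real.mul_self_sqrt hjpos.le
      calc (1 / (j:ℝ)) * mhn (j-1) m ≤ (1 / (j:ℝ)) * (2^m * Real.sqrt (j:ℝ)) := by
            apply mul_le_mul_of_nonneg_left h1 (by positivity)
        _ = 2^m * (1 / Real.sqrt (j:ℝ)) := by
            rw [mul_comm, mul_one_div, mul_one_div, div_eq_div_iff hjpos.ne' hs.ne']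
            linear_combination (2:ℝ)^m * hsq
    calc ∑ j ∈ Finset.Icc 1 n, (1 / (j:ℝ)) * mhn (j-1) m
        ≤ ∑ j ∈ Finset.Icc 1 n, 2^m * (1 / Real.sqrt (j:ℝ)) := Finset.sum_le_sum step
      _ = 2^m * ∑ j ∈ Finset.Icc 1 n, 1 / Real.sqrt (j:ℝ) := by rw [Finset.mul_sum]
      _ ≤ 2^m * (2 * Real.sqrt (n:ℝ)) := by
          apply mul_le_mul_of_nonneg_left (sum_one_div_sqrt_le n) (by positivity)
      _ ≤ 2^(m+1) * Real.sqrt ((n:ℝ)+1) := by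
          rw [pow_succ]
          have h : Real.sqrt (n:ℝ) ≤ Real.sqrt ((n:ℝ)+1) := Real.sqrt_le_sqrt (by linarith)
          nlinarith [pow_pos (show (0:ℝ) < 2 by norm_num) m]

/-- Bound on partial sums `∑_{j=1}^{N} mhn(j-1,m)/j ≤ 2^{m+1} √N`. -/
lemma mhn_partial_bound (m N : ℕ) :
    ∑ j ∈ Finset.Icc 1 N, mhn (j-1) m / (j:ℝ) ≤ 2^(m+1) * Real.sqrt (N:ℝ) := by
  have step : ∀ j ∈ Finset.Icc 1 N, mhn (j-1) m / (j:ℝ) ≤ 2^m * (1 / Real.sqrt (j:ℝ)) := by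
    intro j hj
    rw [Finset.mem_Icc] at hj
    have hj1 : 1 ≤ j := hj.1
    have hjpos : (0:ℝ) < (j:ℝ) := by exact_mod_cast hj1
    have hcast : ((j - 1 : ℕ) : ℝ) + 1 = (j : ℝ) := by
      have : (j - 1) + 1 = j := by omega
      exact_mod_cast congrArg (Nat.cast (R := ℝ)) this
    have h1 : mhn (j-1) m ≤ 2^m * Real.sqrt (j:ℝ) := by
      have := mhn_le m (j-1); rwa [hcast] at this
    have hs : (0:ℝ) < Real.sqrt (j:ℝ) := Real.sqrt_pos.2 hjpos
    have hsq : Real.sqrt (j:ℝ) * Real.sqrt (j:ℝ) = (j:ℝ) := Real.mul_self_sqrt hjpos.le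
    rw [div_le_iff₀ hjpos]
    calc mhn (j-1) m ≤ 2^m * Real.sqrt (j:ℝ) := h1
      _ = 2^m * (1 / Real.sqrt (j:ℝ)) * (j:ℝ) := by
          field_simp
          linear_combination hsq
  calc ∑ j ∈ Finset.Icc 1 N, mhn (j-1) m / (j:ℝ)
      ≤ ∑ j ∈ Finset.Icc 1 N, 2^m * (1 / Real.sqrt (j:ℝ)) := Finset.sum_le_sum step
    _ = 2^m * ∑ j ∈ Finset.Icc 1 N, 1 / Real.sqrt (j:ℝ) := by rw [Finset.mul_sum]
    _ ≤ 2^m * (2 * Real.sqrt (N:ℝ)) := by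
        apply mul_le_mul_of_nonneg_left (sum_one_div_sqrt_le N) (by positivity)
    _ = 2^(m+1) * Real.sqrt (N:ℝ) := by rw [pow_succ]; ring

lemma bet_le_one (i j : ℕ) : bet i j ≤ 1 := by
  calc bet i j ≤ 1 / ((j:ℝ) + 1) := bet_le_right i j
    _ ≤ 1 := by
        rw [div_le_one (by positivity)]
        have : (0:ℝ) ≤ (j:ℝ) := Nat.cast_nonneg j
        linarith

/-- Finite telescoping of `bet i j / j`. -/
lemma bet_tele (i u N : ℕ) (h : u ≤ N) :
    ∑ j ∈ Finset.Ico (u+1) (N+1), bet i j / (j : ℝ)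
      = (bet i u - bet i N) / ((i : ℝ) + 1) := by
  induction N, h using Nat.le_induction with
  | base => simp
  | succ N hN ih =>
    rw [Finset.sum_Ico_succ_top (by omega), ih]
    have hc : ((N + 1 : ℕ) : ℝ) = (N : ℝ) + 1 := by push_cast; ring
    rw [hc, bet_T1 i N]
    ring

noncomputable def sfun (j : ℕ) : ℝ := ∑' i, (1/2 : ℝ) ^ (i + 1) * bet i j

lemma summable_sfun (j : ℕ) : Summable fun i => (1/2 : ℝ) ^ (i + 1) * bet i j := by
  apply Summable.of_nonneg_of_le
    (fun i => mul_nonneg (by positivity) (bet_pos i j).le)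
    (fun i => ?_)
    ((summable_geometric_of_lt_one (show (0:ℝ) ≤ 1/2 by norm_num)
      (show (1/2:ℝ) < 1 by norm_num)).mul_left (1/2 : ℝ))
  show (1/2:ℝ)^(i+1) * bet i j ≤ (1/2:ℝ) * (1/2)^i
  rw [pow_succ, mul_comm ((1/2:ℝ)^i) (1/2:ℝ)]
  calc (1/2:ℝ) * (1/2)^i * bet i j ≤ (1/2:ℝ) * (1/2)^i * 1 := by
        apply mul_le_mul_of_nonneg_left (bet_le_one i j) (by positivity)
    _ = (1/2:ℝ) * (1/2)^i := mul_one _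

lemma hasSum_half_pow : HasSum (fun i : ℕ => (1/2 : ℝ) ^ (i + 1)) 1 := by
  have h := (hasSum_geometric_of_lt_one (show (0:ℝ) ≤ 1/2 by norm_num)
    (show (1/2:ℝ) < 1 by norm_num)).mul_left (1/2 : ℝ)
  have : (1/2 : ℝ) * (1 - 1/2)⁻¹ = 1 := by norm_num
  rw [this] at h
  have e : (fun i : ℕ => (1/2 : ℝ) ^ (i + 1)) = fun i => 1/2 * (1/2 : ℝ) ^ i := by
    funext i; rw [pow_succ]; ring
  rw [e]; exact h

lemma sfun_nonneg (j : ℕ) : 0 ≤ sfun j :=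
  tsum_nonneg fun i => mul_nonneg (by positivity) (bet_pos i j).le

lemma sfun_le (j : ℕ) : sfun j ≤ 1 / ((j : ℝ) + 1) := by
  have h1 : HasSum (fun i : ℕ => (1/2 : ℝ) ^ (i + 1) * (1 / ((j:ℝ)+1))) (1 / ((j:ℝ)+1)) := by
    simpa using hasSum_half_pow.mul_right (1 / ((j:ℝ)+1))
  rw [← h1.tsum_eq]
  apply Summable.tsum_le_tsum _ (summable_sfun j) h1.summable
  intro i
  exact mul_le_mul_of_nonneg_left (bet_le_right i j) (by positivity)

lemma sfun_rec (j : ℕ) : sfun j + sfun (j + 1) = 1 / ((j : ℝ) + 1) := by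
  have key : HasSum (fun i : ℕ => (1/2:ℝ)^(i+1) * bet i j + (1/2:ℝ)^(i+1) * bet i (j+1))
      (bet 0 j) := by
    have hnn : ∀ i : ℕ, 0 ≤ (1/2:ℝ)^(i+1) * bet i j + (1/2:ℝ)^(i+1) * bet i (j+1) :=
      fun i => add_nonneg (mul_nonneg (by positivity) (bet_pos i j).le)
        (mul_nonneg (by positivity) (bet_pos i (j+1)).le)
    rw [hasSum_iff_tendsto_nat_of_nonneg hnn]
    have heq : ∀ n : ℕ, ∑ i ∈ Finset.range n,
        ((1/2:ℝ)^(i+1) * bet i j + (1/2:ℝ)^(i+1) * bet i (j+1))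
        = (1/2:ℝ)^0 * bet 0 j - (1/2:ℝ)^n * bet n j := by
      intro n
      rw [← Finset.sum_range_sub' (fun i => (1/2:ℝ)^i * bet i j) n]
      apply Finset.sum_congr rfl
      intro i _
      rw [← mul_add, bet_T2]
    simp only [heq, pow_zero, one_mul]
    have hz : Tendsto (fun n : ℕ => (1/2:ℝ)^n * bet n j) atTop (nhds 0) := by
      refine squeeze_zero (fun n => mul_nonneg (by positivity) (bet_pos n j).le)
        (fun n => ?_)
        (tendsto_pow_atTop_nhds_zero_of_lt_one (show (0:ℝ) ≤ 1/2 by norm_num)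
          (show (1/2:ℝ) < 1 by norm_num))
      calc (1/2:ℝ)^n * bet n j ≤ (1/2:ℝ)^n * 1 :=
            mul_le_mul_of_nonneg_left (bet_le_one n j) (by positivity)
        _ = (1/2:ℝ)^n := mul_one _
    simpa using (tendsto_const_nhds.sub hz)
  have h2 : HasSum (fun i : ℕ => (1/2:ℝ)^(i+1) * bet i j + (1/2:ℝ)^(i+1) * bet i (j+1))
      (sfun j + sfun (j+1)) := (summable_sfun j).hasSum.add (summable_sfun (j+1)).hasSum
  rw [h2.unique key, bet_zero_left]

noncomputable def rho (j N : ℕ) : ℝ :=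
  (-1 : ℝ) ^ (j + 1) * ∑ n ∈ Finset.Icc (j + 1) N, (-1 : ℝ) ^ n / (n : ℝ)

lemma rho_self (N : ℕ) : rho N N = 0 := by
  unfold rho
  rw [Finset.Icc_eq_empty (by omega), Finset.sum_empty, mul_zero]

lemma neg_one_sq_pow (k : ℕ) : ((-1 : ℝ) ^ k) * ((-1 : ℝ) ^ k) = 1 := by
  rw [← pow_add]
  exact Even.neg_one_pow ⟨k, by ring⟩

lemma rho_rec (j N : ℕ) (h : j < N) : rho j N = 1 / ((j : ℝ) + 1) - rho (j + 1) N := by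
  unfold rho
  rw [show Finset.Icc (j + 1) N = Finset.Ico (j + 1) (N + 1) from (Finset.Ico_add_one_right_eq_Icc _ _).symm,
    Finset.sum_eq_sum_Ico_succ_bot (by omega),
    show Finset.Ico (j + 1 + 1) (N + 1) = Finset.Icc (j + 1 + 1) N from Finset.Ico_add_one_right_eq_Icc _ _]
  rw [mul_add]
  have h1 : (-1 : ℝ) ^ (j + 1) * ((-1 : ℝ) ^ (j + 1) / ((j:ℝ) + 1 )) = 1 / ((j:ℝ) + 1) := by
    rw [mul_div_assoc'] -- may need adjusting
    rw [neg_one_sq_pow]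
  have h2 : (-1 : ℝ) ^ (j + 1) = -(-1 : ℝ) ^ (j + 1 + 1) := by
    rw [pow_succ]; ring
  push_cast at h1 ⊢
  rw [h1]
  rw [h2]
  ring

lemma rho_sub_sfun (k : ℕ) : ∀ j N : ℕ, j + k = N →
    rho j N - sfun j = (-1 : ℝ) ^ k * (-(sfun N)) := by
  induction k with
  | zero =>
    intro j N h
    have : j = N := by omega
    subst this
    rw [rho_self]
    ring
  | succ k ih =>
    intro j N h
    have hjN : j < N := by omega
    have hs : sfun j = 1 / ((j:ℝ) + 1) - sfun (j + 1) := by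
      have := sfun_rec j; linarith
    have hI := ih (j+1) N (by omega)
    rw [rho_rec j N hjN, hs, pow_succ]
    linear_combination -hI

lemma abs_rho_sub_sfun (j N : ℕ) (h : j ≤ N) :
    |rho j N - sfun j| ≤ 1 / ((N : ℝ) + 1) := by
  obtain ⟨k, rfl⟩ : ∃ k, j + k = N := ⟨N - j, by omega⟩
  rw [rho_sub_sfun k j (j+k) rfl, abs_mul, abs_pow, abs_neg, abs_neg]
  simp only [abs_one, one_pow, one_mul]
  rw [abs_of_nonneg (sfun_nonneg _)]
  exact sfun_le _

lemma tendsto_sqrt_div : Tendsto (fun N : ℕ => Real.sqrt (N:ℝ) / ((N:ℝ) + 1)) atTop (nhds 0) := by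
  have hr : Tendsto (fun x : ℝ => x ^ (-(1/2) : ℝ)) atTop (nhds 0) :=
    tendsto_rpow_neg_atTop (by norm_num)
  have hcomp : Tendsto (fun N : ℕ => ((N:ℝ)) ^ (-(1/2) : ℝ)) atTop (nhds 0) :=
    hr.comp tendsto_natCast_atTop_atTop
  apply squeeze_zero (fun N => by positivity) (fun N => ?_) hcomp
  rcases Nat.eq_zero_or_pos N with h | h
  · subst h; simp
  · have hpos : (0:ℝ) < (N:ℝ) := by exact_mod_cast h
    have hs : (0:ℝ) < Real.sqrt (N:ℝ) := Real.sqrt_pos.2 hpos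
    have hrw : ((N:ℝ)) ^ (-(1/2) : ℝ) = 1 / Real.sqrt (N:ℝ) := by
      rw [Real.rpow_neg hpos.le, Real.sqrt_eq_rpow, one_div]
      norm_num
    rw [hrw, div_le_div_iff₀ (by positivity) hs]
    have hsq : Real.sqrt (N:ℝ) * Real.sqrt (N:ℝ) = (N:ℝ) := Real.mul_self_sqrt hpos.le
    nlinarith

lemma bet_tendsto_zero (i : ℕ) : Tendsto (fun N : ℕ => bet i N) atTop (nhds 0) := by
  apply squeeze_zero (fun N => (bet_pos i N).le) (fun N => ?_)
    tendsto_one_div_add_atTop_nhds_zero_nat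
  exact bet_le_right i N

lemma err_tendsto_zero (i m : ℕ) :
    Tendsto (fun N : ℕ => bet i N * ∑ u ∈ Finset.Icc 1 N, mhn (u-1) m / (u:ℝ))
      atTop (nhds 0) := by
  have hb : Tendsto (fun N : ℕ => 2^(m+1) * (Real.sqrt (N:ℝ) / ((N:ℝ)+1))) atTop (nhds 0) := by
    simpa using tendsto_sqrt_div.const_mul ((2:ℝ)^(m+1))
  apply squeeze_zero (fun N => ?_) (fun N => ?_) hb
  · apply mul_nonneg (bet_pos i N).le
    apply Finset.sum_nonneg
    intro u hu
    exact div_nonneg (mhn_nonneg m (u-1)) (Nat.cast_nonneg u)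
  · have h1 : bet i N ≤ 1 / ((N:ℝ)+1) := bet_le_right i N
    have h2 := mhn_partial_bound m N
    have h3 : (0:ℝ) ≤ ∑ u ∈ Finset.Icc 1 N, mhn (u-1) m / (u:ℝ) :=
      Finset.sum_nonneg fun u hu => div_nonneg (mhn_nonneg m (u-1)) (Nat.cast_nonneg u)
    calc bet i N * ∑ u ∈ Finset.Icc 1 N, mhn (u-1) m / (u:ℝ)
        ≤ (1 / ((N:ℝ)+1)) * (2^(m+1) * Real.sqrt (N:ℝ)) := by
          apply mul_le_mul h1 h2 h3 (by positivity)
      _ = 2^(m+1) * (Real.sqrt (N:ℝ) / ((N:ℝ)+1)) := by ring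

lemma tendstoG (i m : ℕ) :
    Tendsto (fun N : ℕ => ∑ j ∈ Finset.Icc 1 N, mhn (j-1) m / (j:ℝ) * bet i j)
      atTop (nhds (1 / ((i:ℝ)+1)^(m+2))) := by
  induction m with
  | zero =>
    have heq : ∀ N : ℕ, ∑ j ∈ Finset.Icc 1 N, mhn (j-1) 0 / (j:ℝ) * bet i j
        = (bet i 0 - bet i N) / ((i:ℝ)+1) := by
      intro N
      rw [← bet_tele i 0 N (Nat.zero_le N), show Finset.Ico (0+1) (N+1) = Finset.Icc 1 N from
        Finset.Ico_add_one_right_eq_Icc _ _]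
      apply Finset.sum_congr rfl
      intro j hj
      rw [show mhn (j-1) 0 = 1 from rfl]
      ring
    simp only [heq]
    have := (tendsto_const_nhds (x := bet i 0) (f := atTop (α := ℕ))).sub
      (bet_tendsto_zero i)
    have h2 := this.div_const ((i:ℝ)+1)
    convert h2 using 2
    rw [bet_zero, sub_zero]
    rw [div_div]
    congr 1
    ring
  | succ m ih =>
    have heq : ∀ N : ℕ, ∑ j ∈ Finset.Icc 1 N, mhn (j-1) (m+1) / (j:ℝ) * bet i j
        = ((∑ u ∈ Finset.Icc 1 N, mhn (u-1) m / (u:ℝ) * bet i u)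
            - bet i N * ∑ u ∈ Finset.Icc 1 N, mhn (u-1) m / (u:ℝ)) / ((i:ℝ)+1) := by
      intro N
      have lhs_eq : ∑ j ∈ Finset.Icc 1 N, mhn (j-1) (m+1) / (j:ℝ) * bet i j
          = ∑ j ∈ Finset.Ico 1 (N+1), ∑ u ∈ Finset.Ico 1 j,
              (mhn (u-1) m / (u:ℝ)) * (bet i j / (j:ℝ)) := by
        rw [show Finset.Ico 1 (N+1) = Finset.Icc 1 N from Finset.Ico_add_one_right_eq_Icc _ _]
        apply Finset.sum_congr rfl
        intro j hj
        rw [Finset.mem_Icc] at hj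
        have hmhn : mhn (j-1) (m+1) = ∑ u ∈ Finset.Ico 1 j, (1/(u:ℝ)) * mhn (u-1) m := by
          rw [mhn, show Finset.Icc 1 (j-1) = Finset.Ico 1 j from by
            rw [← Finset.Ico_add_one_right_eq_Icc]; congr 1; omega]
        rw [hmhn, Finset.sum_div, Finset.sum_mul]
        apply Finset.sum_congr rfl
        intro u hu
        ring
      rw [lhs_eq, ← Finset.sum_Ico_Ico_comm' 1 (N+1)
        (fun u j => (mhn (u-1) m / (u:ℝ)) * (bet i j / (j:ℝ)))]
      have inner_eq : ∀ u ∈ Finset.Ico 1 (N+1),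
          ∑ j ∈ Finset.Ico (u+1) (N+1), (mhn (u-1) m / (u:ℝ)) * (bet i j / (j:ℝ))
            = (mhn (u-1) m / (u:ℝ) * bet i u - bet i N * (mhn (u-1) m / (u:ℝ))) / ((i:ℝ)+1) := by
        intro u hu
        rw [Finset.mem_Ico] at hu
        rw [← Finset.mul_sum, bet_tele i u N (by omega)]
        ring
      rw [Finset.sum_congr rfl inner_eq, ← Finset.sum_div, Finset.sum_sub_distrib,
        ← Finset.mul_sum, show Finset.Ico 1 (N+1) = Finset.Icc 1 N from Finset.Ico_add_one_right_eq_Icc _ _]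
    simp only [heq]
    have h := (ih.sub (err_tendsto_zero i m)).div_const ((i:ℝ)+1)
    convert h using 2
    rw [sub_zero, div_div, ← pow_succ]

/-- Shift between `range` and `Icc 1` partial sums for functions vanishing at `0`. -/
lemma tendsto_Icc_iff_range {f : ℕ → ℝ} (hf : f 0 = 0) (L : ℝ) :
    Tendsto (fun N : ℕ => ∑ j ∈ Finset.Icc 1 N, f j) atTop (nhds L) ↔
      Tendsto (fun n : ℕ => ∑ j ∈ Finset.range n, f j) atTop (nhds L) := by
  have key : ∀ n : ℕ, ∑ j ∈ Finset.range (n+1), f j = ∑ j ∈ Finset.Icc 1 n, f j := by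
    intro n
    rw [Finset.range_eq_Ico, Finset.sum_eq_sum_Ico_succ_bot (by omega), hf, zero_add,
      show Finset.Ico 1 (n+1) = Finset.Icc 1 n from Finset.Ico_add_one_right_eq_Icc _ _]
  constructor
  · intro h
    rw [show (fun n : ℕ => ∑ j ∈ Finset.range n, f j)
        = fun n => ∑ j ∈ Finset.Icc 1 (n - 1), f j from ?_]
    · exact h.comp (tendsto_sub_atTop_nat 1)
    · funext n
      cases n with
      | zero => simp
      | succ n => rw [key n]; norm_num
  · intro h
    rw [show (fun N : ℕ => ∑ j ∈ Finset.Icc 1 N, f j)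
        = fun N => ∑ j ∈ Finset.range (N+1), f j from by funext n; rw [key n]]
    exact h.comp (tendsto_add_atTop_nat 1)

lemma hasSumG (i m : ℕ) :
    HasSum (fun j : ℕ => mhn (j-1) m / (j:ℝ) * bet i j) (1 / ((i:ℝ)+1)^(m+2)) := by
  have hnn : ∀ j : ℕ, 0 ≤ mhn (j-1) m / (j:ℝ) * bet i j := fun j =>
    mul_nonneg (div_nonneg (mhn_nonneg _ _) (Nat.cast_nonneg j)) (bet_pos i j).le
  rw [hasSum_iff_tendsto_nat_of_nonneg hnn]
  rw [← tendsto_Icc_iff_range (by simp)]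
  exact tendstoG i m

lemma summable_main (m : ℕ) : Summable (fun j : ℕ => mhn (j-1) m / (j:ℝ) * sfun j) := by
  apply Summable.of_nonneg_of_le
    (fun j => mul_nonneg (div_nonneg (mhn_nonneg _ _) (Nat.cast_nonneg j)) (sfun_nonneg j))
    (fun j => ?_)
    (((Real.summable_one_div_nat_rpow (p := (3:ℝ)/2)).mpr (by norm_num)).mul_left ((2:ℝ)^m))
  rcases Nat.eq_zero_or_pos j with h | h
  · subst h
    simp only [Nat.cast_zero, div_zero, zero_mul]
    positivity
  · have hpos : (0:ℝ) < (j:ℝ) := by exact_mod_cast h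
    have hs : (0:ℝ) < Real.sqrt (j:ℝ) := Real.sqrt_pos.2 hpos
    have hsq : Real.sqrt (j:ℝ) * Real.sqrt (j:ℝ) = (j:ℝ) := Real.mul_self_sqrt hpos.le
    have hrp : (j:ℝ) ^ ((3:ℝ)/2) = (j:ℝ) * Real.sqrt (j:ℝ) := by
      rw [show (3:ℝ)/2 = 1 + 1/2 by norm_num, Real.rpow_add hpos, Real.rpow_one,
        ← Real.sqrt_eq_rpow]
    have hcast : ((j - 1 : ℕ) : ℝ) + 1 = (j : ℝ) := by
      have : (j - 1) + 1 = j := by omega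
      exact_mod_cast congrArg (Nat.cast (R := ℝ)) this
    have h1 : mhn (j-1) m ≤ 2^m * Real.sqrt (j:ℝ) := by
      have := mhn_le m (j-1); rwa [hcast] at this
    have h2 : sfun j ≤ 1/((j:ℝ)+1) := sfun_le j
    have h3 : (0:ℝ) < (j:ℝ)+1 := by linarith
    have key : (2^m * Real.sqrt (j:ℝ)) / (j:ℝ) * (1/((j:ℝ)+1)) ≤ 2^m * (1/(j:ℝ)^((3:ℝ)/2)) := by
      rw [hrp, show (2^m * Real.sqrt (j:ℝ)) / (j:ℝ) * (1/((j:ℝ)+1))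
          = (2^m * Real.sqrt (j:ℝ)) / ((j:ℝ)*((j:ℝ)+1)) from by
            rw [div_mul_div_comm, mul_one],
        show (2:ℝ)^m * (1/((j:ℝ) * Real.sqrt (j:ℝ))) = 2^m / ((j:ℝ) * Real.sqrt (j:ℝ)) from by
          ring,
        div_le_div_iff₀ (by positivity) (by positivity)]
      have e1 : (2:ℝ)^m * Real.sqrt (j:ℝ) * ((j:ℝ) * Real.sqrt (j:ℝ))
          = 2^m * (j:ℝ) * (j:ℝ) := by linear_combination ((2:ℝ)^m * (j:ℝ)) * hsq
      rw [e1]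
      nlinarith [pow_pos (show (0:ℝ) < 2 by norm_num) m, hpos]
    calc mhn (j-1) m / (j:ℝ) * sfun j
        ≤ (2^m * Real.sqrt (j:ℝ)) / (j:ℝ) * (1/((j:ℝ)+1)) := by
          apply mul_le_mul (by gcongr) h2 (sfun_nonneg j) (by positivity)
      _ ≤ 2^m * (1/(j:ℝ)^((3:ℝ)/2)) := key

lemma final_identity (m : ℕ) :
    ∑' j : ℕ, mhn (j-1) m / (j:ℝ) * sfun j
      = ∑' i : ℕ, (1/2 : ℝ) ^ (i+1) / ((i:ℝ)+1) ^ (m+2) := by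
  have hrow : ∀ j : ℕ, Summable (fun i => mhn (j-1) m / (j:ℝ) * ((1/2:ℝ)^(i+1) * bet i j)) :=
    fun j => (summable_sfun j).mul_left _
  have hrowsum : ∀ j : ℕ, ∑' i, mhn (j-1) m / (j:ℝ) * ((1/2:ℝ)^(i+1) * bet i j)
      = mhn (j-1) m / (j:ℝ) * sfun j := fun j => tsum_mul_left
  have huncurry : Summable (Function.uncurry
      (fun j i => mhn (j-1) m / (j:ℝ) * ((1/2:ℝ)^(i+1) * bet i j))) := by
    apply (summable_prod_of_nonneg ?_).mpr
    constructor
    · intro j; exact hrow j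
    · apply Summable.congr (summable_main m)
      intro j
      exact (hrowsum j).symm
    · rintro ⟨j, i⟩
      exact mul_nonneg (div_nonneg (mhn_nonneg _ _) (Nat.cast_nonneg j))
        (mul_nonneg (by positivity) (bet_pos i j).le)
  have hcomm := Summable.tsum_comm (f := fun j i => mhn (j-1) m / (j:ℝ) * ((1/2:ℝ)^(i+1) * bet i j))
    huncurry
  calc ∑' j : ℕ, mhn (j-1) m / (j:ℝ) * sfun j
      = ∑' j : ℕ, ∑' i : ℕ, mhn (j-1) m / (j:ℝ) * ((1/2:ℝ)^(i+1) * bet i j) := by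
        exact (tsum_congr hrowsum).symm
    _ = ∑' i : ℕ, ∑' j : ℕ, mhn (j-1) m / (j:ℝ) * ((1/2:ℝ)^(i+1) * bet i j) := hcomm.symm
    _ = ∑' i : ℕ, (1/2:ℝ)^(i+1) * (1 / ((i:ℝ)+1)^(m+2)) := by
        apply tsum_congr
        intro i
        have : ∀ j : ℕ, mhn (j-1) m / (j:ℝ) * ((1/2:ℝ)^(i+1) * bet i j)
            = (1/2:ℝ)^(i+1) * (mhn (j-1) m / (j:ℝ) * bet i j) := fun j => by ring
        rw [tsum_congr this, tsum_mul_left, (hasSumG i m).tsum_eq]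
    _ = ∑' i : ℕ, (1/2 : ℝ) ^ (i+1) / ((i:ℝ)+1) ^ (m+2) := by
        apply tsum_congr
        intro i
        rw [mul_one_div]

theorem stmt_6 (m : ℕ) :
    Tendsto (fun N : ℕ =>
        ∑ n ∈ Finset.Icc 1 N, (-1 : ℝ) ^ n / (n : ℝ) *
          ∑ j ∈ Finset.Ico 1 n, (-1 : ℝ) ^ j / (j : ℝ) * mhn (j - 1) m)
      atTop
      (nhds (-(∑' i : ℕ, (1 / 2 : ℝ) ^ (i + 1) / ((i : ℝ) + 1) ^ (m + 2)))) := by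
  -- Step 1: rewrite the partial sums via the swap.
  have swap : ∀ N : ℕ,
      (∑ n ∈ Finset.Icc 1 N, (-1 : ℝ) ^ n / (n : ℝ) *
        ∑ j ∈ Finset.Ico 1 n, (-1 : ℝ) ^ j / (j : ℝ) * mhn (j - 1) m)
      = -∑ j ∈ Finset.Icc 1 N, mhn (j-1) m / (j:ℝ) * rho j N := by
    intro N
    have step1 : (∑ n ∈ Finset.Icc 1 N, (-1 : ℝ) ^ n / (n : ℝ) *
          ∑ j ∈ Finset.Ico 1 n, (-1 : ℝ) ^ j / (j : ℝ) * mhn (j - 1) m)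
        = ∑ n ∈ Finset.Ico 1 (N+1), ∑ j ∈ Finset.Ico 1 n,
            ((-1:ℝ)^j / (j:ℝ) * mhn (j-1) m) * ((-1:ℝ)^n / (n:ℝ)) := by
      rw [show Finset.Ico 1 (N+1) = Finset.Icc 1 N from Finset.Ico_add_one_right_eq_Icc _ _]
      apply Finset.sum_congr rfl
      intro n hn
      rw [Finset.mul_sum]
      apply Finset.sum_congr rfl
      intro j hj
      ring
    rw [step1, ← Finset.sum_Ico_Ico_comm' 1 (N+1)
      (fun j n => ((-1:ℝ)^j / (j:ℝ) * mhn (j-1) m) * ((-1:ℝ)^n / (n:ℝ))),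
      show Finset.Ico 1 (N+1) = Finset.Icc 1 N from Finset.Ico_add_one_right_eq_Icc _ _,
      ← Finset.sum_neg_distrib]
    apply Finset.sum_congr rfl
    intro j hj
    rw [← Finset.mul_sum,
      show Finset.Ico (j+1) (N+1) = Finset.Icc (j+1) N from Finset.Ico_add_one_right_eq_Icc _ _]
    have hrho : ∑ n ∈ Finset.Icc (j+1) N, (-1:ℝ)^n / (n:ℝ) = (-1:ℝ)^(j+1) * rho j N := by
      unfold rho
      rw [← mul_assoc, neg_one_sq_pow, one_mul]
    rw [hrho]
    have : (-1:ℝ)^j * (-1:ℝ)^(j+1) = -1 := by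
      rw [pow_succ, ← mul_assoc, neg_one_sq_pow]; ring
    linear_combination (mhn (j-1) m / (j:ℝ) * rho j N) * this
  -- Step 2: limits
  set M : ℝ := ∑' j : ℕ, mhn (j-1) m / (j:ℝ) * sfun j with hM
  have hf0 : mhn (0-1) m / ((0:ℕ):ℝ) * sfun 0 = 0 := by
    simp
  have hA : Tendsto (fun N : ℕ => ∑ j ∈ Finset.Icc 1 N, mhn (j-1) m / (j:ℝ) * sfun j)
      atTop (nhds M) := by
    rw [tendsto_Icc_iff_range hf0]
    exact (summable_main m).hasSum.tendsto_sum_nat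
  have hE : Tendsto (fun N : ℕ => ∑ j ∈ Finset.Icc 1 N, mhn (j-1) m / (j:ℝ) * rho j N
      - ∑ j ∈ Finset.Icc 1 N, mhn (j-1) m / (j:ℝ) * sfun j) atTop (nhds 0) := by
    have hb : Tendsto (fun N : ℕ => 2^(m+1) * (Real.sqrt (N:ℝ) / ((N:ℝ)+1))) atTop (nhds 0) := by
      simpa using tendsto_sqrt_div.const_mul ((2:ℝ)^(m+1))
    apply squeeze_zero_norm (fun N => ?_) hb
    rw [← Finset.sum_sub_distrib]
    have habs : ∀ j ∈ Finset.Icc 1 N,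
        |mhn (j-1) m / (j:ℝ) * rho j N - mhn (j-1) m / (j:ℝ) * sfun j|
          ≤ mhn (j-1) m / (j:ℝ) * (1/((N:ℝ)+1)) := by
      intro j hj
      rw [Finset.mem_Icc] at hj
      rw [← mul_sub, abs_mul,
        abs_of_nonneg (div_nonneg (mhn_nonneg _ _) (Nat.cast_nonneg j))]
      exact mul_le_mul_of_nonneg_left (abs_rho_sub_sfun j N hj.2)
        (div_nonneg (mhn_nonneg _ _) (Nat.cast_nonneg j))
    calc ‖∑ j ∈ Finset.Icc 1 N, (mhn (j-1) m / (j:ℝ) * rho j N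
            - mhn (j-1) m / (j:ℝ) * sfun j)‖
        ≤ ∑ j ∈ Finset.Icc 1 N, |mhn (j-1) m / (j:ℝ) * rho j N
            - mhn (j-1) m / (j:ℝ) * sfun j| := by
          rw [Real.norm_eq_abs]
          exact Finset.abs_sum_le_sum_abs _ _
      _ ≤ ∑ j ∈ Finset.Icc 1 N, mhn (j-1) m / (j:ℝ) * (1/((N:ℝ)+1)) :=
          Finset.sum_le_sum habs
      _ = (∑ j ∈ Finset.Icc 1 N, mhn (j-1) m / (j:ℝ)) * (1/((N:ℝ)+1)) := by
          rw [Finset.sum_mul]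
      _ ≤ (2^(m+1) * Real.sqrt (N:ℝ)) * (1/((N:ℝ)+1)) := by
          apply mul_le_mul_of_nonneg_right (mhn_partial_bound m N) (by positivity)
      _ = 2^(m+1) * (Real.sqrt (N:ℝ) / ((N:ℝ)+1)) := by ring
  have hfinal : Tendsto (fun N : ℕ =>
      -∑ j ∈ Finset.Icc 1 N, mhn (j-1) m / (j:ℝ) * rho j N) atTop (nhds (-M)) := by
    have h1 := (hA.neg).sub hE
    rw [show -M - 0 = -M by ring] at h1
    apply h1.congr
    intro N
    ring
  rw [show (nhds (-(∑' i : ℕ, (1 / 2 : ℝ) ^ (i + 1) / ((i : ℝ) + 1) ^ (m + 2))))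
      = nhds (-M) from by rw [hM, final_identity m]]
  apply hfinal.congr
  intro N
  rw [swap N]
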